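/- Let t₀ ≥ 0 and let A : [t₀,∞) → (0,∞) be continuous with ∫_{t₀}^∞ A(t) dt = ∞. Then for every a > 0 there exists a unique b ∈ ℝ such that the solution Θ of Θ'' = AΘ on [t₀,∞) with Θ(t₀) = a and Θ'(t₀) = b is bounded; this bounded solution is strictly positive, strictly decreasing, and tends to 0 at infinity. Moreover, for every b' > b the solution with initial conditions Θ(t₀) = a, Θ'(t₀) = b' tends to +∞ at infinity, and for every b' < b it tends to −∞ at infinity. -/

import Mathlib

open MeasureTheory Filter Set

/-- `Θ`, with derivative `Θ'`, solves the second order linear ODE `Θ'' = A Θ` on the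
half-line `[t₀, ∞)` (derivatives at the endpoint `t₀` are one-sided). -/
def IsSolOn (t₀ : ℝ) (A Θ Θ' : ℝ → ℝ) : Prop :=
  ∀ t ∈ Set.Ici t₀,
    HasDerivWithinAt Θ (Θ' t) (Set.Ici t₀) t ∧
    HasDerivWithinAt Θ' (A t * Θ t) (Set.Ici t₀) t

namespace UBaux

open intervalIntegral Metric Topology

variable {t₀ : ℝ} {A Θ Θ' f : ℝ → ℝ}

lemma contT (h : IsSolOn t₀ A Θ Θ') : ContinuousOn Θ (Ici t₀) :=
  fun t ht => (h t ht).1.continuousWithinAt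

lemma contT' (h : IsSolOn t₀ A Θ Θ') : ContinuousOn Θ' (Ici t₀) :=
  fun t ht => (h t ht).2.continuousWithinAt

lemma hasD (h : IsSolOn t₀ A Θ Θ') {t : ℝ} (ht : t₀ < t) : HasDerivAt Θ (Θ' t) t :=
  (h t ht.le).1.hasDerivAt (Ici_mem_nhds ht)

lemma hasD' (h : IsSolOn t₀ A Θ Θ') {t : ℝ} (ht : t₀ < t) : HasDerivAt Θ' (A t * Θ t) t :=
  (h t ht.le).2.hasDerivAt (Ici_mem_nhds ht)

lemma intInt (h : ContinuousOn f (Ici t₀)) {s t : ℝ} (hs : t₀ ≤ s) (ht : t₀ ≤ t) :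
    IntervalIntegrable f volume s t :=
  (h.mono (fun x hx => le_trans (le_min hs ht) hx.1)).intervalIntegrable

lemma ftcT (h : IsSolOn t₀ A Θ Θ') {s t : ℝ} (hs : t₀ ≤ s) (hst : s ≤ t) :
    Θ t = Θ s + ∫ u in s..t, Θ' u := by
  have key := intervalIntegral.integral_eq_sub_of_hasDeriv_right_of_le hst
    ((contT h).mono (fun x hx => hs.trans hx.1))
    (fun x hx => ((hasD h (lt_of_le_of_lt hs hx.1)).hasDerivWithinAt))
    (intInt (contT' h) hs (hs.trans hst))
  linarith

lemma ftcT' (hAc : ContinuousOn A (Ici t₀)) (h : IsSolOn t₀ A Θ Θ') {s t : ℝ}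
    (hs : t₀ ≤ s) (hst : s ≤ t) :
    Θ' t = Θ' s + ∫ u in s..t, A u * Θ u := by
  have key := intervalIntegral.integral_eq_sub_of_hasDeriv_right_of_le hst
    ((contT' h).mono (fun x hx => hs.trans hx.1))
    (fun x hx => ((hasD' h (lt_of_le_of_lt hs hx.1)).hasDerivWithinAt))
    (intInt (hAc.mul (contT h)) hs (hs.trans hst))
  linarith


/-- invariance: once positive with nonnegative slope, stays so. -/
lemma invariance (hAc : ContinuousOn A (Ici t₀)) (hApos : ∀ t ≥ t₀, 0 < A t)
    (h : IsSolOn t₀ A Θ Θ') {s₀ : ℝ} (hs₀ : t₀ ≤ s₀) (h1 : 0 < Θ s₀) (h2 : 0 ≤ Θ' s₀) :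
    ∀ t, s₀ ≤ t → Θ s₀ ≤ Θ t ∧ Θ' s₀ ≤ Θ' t := by
  by_contra hcon
  push_neg at hcon
  obtain ⟨t₁, ht₁, hbad₁⟩ := hcon
  set bad : Set ℝ := {t | s₀ ≤ t ∧ (Θ t < Θ s₀ ∨ Θ' t < Θ' s₀)} with hbaddef
  have hne : bad.Nonempty := ⟨t₁, ht₁, by
    rcases le_or_gt (Θ s₀) (Θ t₁) with h' | h'
    · exact Or.inr (hbad₁ h')
    · exact Or.inl h'⟩
  have hbb : BddBelow bad := ⟨s₀, fun x hx => hx.1⟩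
  set u := sInf bad with hu
  have hu₀ : s₀ ≤ u := le_csInf hne (fun x hx => hx.1)
  have hut₀ : t₀ ≤ u := hs₀.trans hu₀
  have good : ∀ t, s₀ ≤ t → t < u → Θ s₀ ≤ Θ t ∧ Θ' s₀ ≤ Θ' t := by
    intro t h1t h2t
    by_contra hc
    have : t ∈ bad := by
      constructor
      · exact h1t
      · push_neg at hc
        rcases le_or_gt (Θ s₀) (Θ t) with h' | h'
        · exact Or.inr (hc h')
        · exact Or.inl h'
    exact absurd (csInf_le hbb this) (not_le.2 h2t)
  have hgoodu : Θ s₀ ≤ Θ u ∧ Θ' s₀ ≤ Θ' u := by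
    rcases eq_or_lt_of_le hu₀ with heq | hlt
    · constructor <;> simp [← heq]
    · have hmem : u ∈ closure (Ico s₀ u) := by
        rw [closure_Ico hlt.ne]
        exact ⟨hu₀, le_rfl⟩
      have hnb : (𝓝[Ico s₀ u] u).NeBot := mem_closure_iff_nhdsWithin_neBot.1 hmem
      have hsub : Ico s₀ u ⊆ Ici t₀ := fun x hx => hs₀.trans hx.1
      have tT : Tendsto Θ (𝓝[Ico s₀ u] u) (𝓝 (Θ u)) := ((contT h) u hut₀).mono hsub
      have tT' : Tendsto Θ' (𝓝[Ico s₀ u] u) (𝓝 (Θ' u)) := ((contT' h) u hut₀).mono hsub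
      constructor
      · refine ge_of_tendsto tT ?_
        exact eventually_of_mem self_mem_nhdsWithin fun x hx => (good x hx.1 hx.2).1
      · refine ge_of_tendsto tT' ?_
        exact eventually_of_mem self_mem_nhdsWithin fun x hx => (good x hx.1 hx.2).2
  have hAu : 0 < A u * Θ u := mul_pos (hApos u hut₀) (lt_of_lt_of_le h1 hgoodu.1)
  have hcont : ContinuousWithinAt (fun t => A t * Θ t) (Ici t₀) u :=
    (hAc u hut₀).mul ((contT h) u hut₀)
  have hev : {t | 0 < A t * Θ t} ∈ 𝓝[Ici t₀] u := hcont (Ioi_mem_nhds hAu)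
  rw [Metric.mem_nhdsWithin_iff] at hev
  obtain ⟨ε, hε, hball⟩ := hev
  set δ := ε / 2 with hδdef
  have hδ : 0 < δ := by positivity
  have hAΘpos : ∀ x ∈ Icc u (u + δ), 0 < A x * Θ x := by
    intro x hx
    refine hball ⟨?_, hut₀.trans hx.1⟩
    rw [Metric.mem_ball, Real.dist_eq, abs_sub_lt_iff]
    constructor <;> [linarith [hx.2]; linarith [hx.1]]
  have hgood' : ∀ x ∈ Icc u (u + δ), Θ' s₀ ≤ Θ' x := by
    intro x hx
    have hx' : Θ' x = Θ' u + ∫ v in u..x, A v * Θ v := ftcT' hAc h hut₀ hx.1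
    have hnn : 0 ≤ ∫ v in u..x, A v * Θ v := by
      apply intervalIntegral.integral_nonneg hx.1
      intro v hv
      exact (hAΘpos v ⟨hv.1, hv.2.trans hx.2⟩).le
    linarith [hgoodu.2]
  have hgood'' : ∀ x ∈ Icc u (u + δ), Θ s₀ ≤ Θ x := by
    intro x hx
    have hx' : Θ x = Θ u + ∫ v in u..x, Θ' v := ftcT h hut₀ hx.1
    have hnn : 0 ≤ ∫ v in u..x, Θ' v := by
      apply intervalIntegral.integral_nonneg hx.1
      intro v hv
      exact le_trans h2 (hgood' v ⟨hv.1, hv.2.trans hx.2⟩)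
    linarith [hgoodu.1]
  obtain ⟨x, hxbad, hxlt⟩ := (csInf_lt_iff hbb hne).1 (by linarith : sInf bad < u + δ)
  have hxu : u ≤ x := csInf_le hbb hxbad
  have : Θ s₀ ≤ Θ x ∧ Θ' s₀ ≤ Θ' x :=
    ⟨hgood'' x ⟨hxu, hxlt.le⟩, hgood' x ⟨hxu, hxlt.le⟩⟩
  rcases hxbad.2 with h' | h' <;> linarith [this.1, this.2]


/-- The integral of A over [s₀, ·] is unbounded. -/
lemma intA_unbounded (hAc : ContinuousOn A (Ici t₀)) (hApos : ∀ t ≥ t₀, 0 < A t)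
    (hAint : (∫⁻ t in Set.Ici t₀, ENNReal.ofReal (A t)) = ⊤) :
    ∀ s₀, t₀ ≤ s₀ → ∀ C : ℝ, ∃ T, s₀ ≤ T ∧ C ≤ ∫ u in s₀..T, A u := by
  have hmax : ∀ x : ℝ, t₀ ≤ max x t₀ := fun x => le_max_right _ _
  set B : ℝ → ℝ := fun t => A (max t t₀) with hBdef
  have hBcont : Continuous B :=
    hAc.comp_continuous (continuous_id.max continuous_const) (fun x => hmax x)
  have hBA : ∀ x, t₀ ≤ x → B x = A x := fun x hx => by
    simp only [hBdef, max_eq_left hx]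
  have hBpos : ∀ x, 0 < B x := fun x => hApos _ (hmax x)
  have glob : ∀ C : ℝ, ∃ T, t₀ ≤ T ∧ C ≤ ∫ u in t₀..T, A u := by
    intro C
    by_contra hcon
    push_neg at hcon
    set g : ℝ → ENNReal := fun t => ENNReal.ofReal (B t) with hgdef
    have hgm : Measurable g := hBcont.measurable.ennreal_ofReal
    set ν := volume.withDensity g with hν
    have hνIcc : ∀ n : ℕ, ν (Icc t₀ (t₀ + n)) ≤ ENNReal.ofReal C := by
      intro n
      have hle : t₀ ≤ t₀ + (n:ℝ) := le_add_of_nonneg_right (Nat.cast_nonneg n)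
      rw [hν, withDensity_apply g measurableSet_Icc]
      have hint : IntegrableOn B (Icc t₀ (t₀ + (n:ℝ))) := hBcont.integrableOn_Icc
      rw [← MeasureTheory.ofReal_integral_eq_lintegral_ofReal hint
        (ae_of_all _ fun x => (hBpos x).le)]
      apply ENNReal.ofReal_le_ofReal
      have h1 : ∫ t in Icc t₀ (t₀ + (n:ℝ)), B t = ∫ t in t₀..(t₀ + (n:ℝ)), B t := by
        rw [intervalIntegral.integral_of_le hle, MeasureTheory.integral_Icc_eq_integral_Ioc]
      have h2 : ∫ t in t₀..(t₀ + (n:ℝ)), B t = ∫ t in t₀..(t₀ + (n:ℝ)), A t := by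
        apply intervalIntegral.integral_congr
        intro x hx
        rw [uIcc_of_le hle] at hx
        exact hBA x hx.1
      rw [h1, h2]
      exact (hcon _ hle).le
    have key2 : ν (Ici t₀) = ⊤ := by
      rw [hν, withDensity_apply g measurableSet_Ici, ← hAint]
      apply MeasureTheory.setLIntegral_congr_fun measurableSet_Ici
      exact fun x hx => by simp only [hgdef]; rw [hBA x hx]
    have hunion : Ici t₀ = ⋃ n : ℕ, Icc t₀ (t₀ + (n:ℝ)) := by
      ext x
      simp only [mem_Ici, mem_iUnion, mem_Icc]
      constructor
      · intro hx
        obtain ⟨n, hn⟩ := exists_nat_ge (x - t₀)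
        exact ⟨n, hx, by linarith⟩
      · rintro ⟨n, h1, _⟩
        exact h1
    have hmono : Monotone (fun n : ℕ => Icc t₀ (t₀ + (n : ℝ))) := by
      intro m n hmn
      apply Icc_subset_Icc le_rfl
      have : (m : ℝ) ≤ (n : ℝ) := Nat.cast_le.2 hmn
      linarith
    have hsup : ν (Ici t₀) = ⨆ n : ℕ, ν (Icc t₀ (t₀ + (n:ℝ))) := by
      rw [hunion]
      exact hmono.measure_iUnion
    rw [key2] at hsup
    have : (⊤ : ENNReal) ≤ ENNReal.ofReal C := hsup ▸ iSup_le hνIcc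
    exact absurd this (not_le.2 ENNReal.ofReal_lt_top)
  intro s₀ hs₀ C
  obtain ⟨T, hT, hge⟩ := glob (max C 0 + 1 + ∫ u in t₀..s₀, A u)
  have hadd : (∫ u in t₀..s₀, A u) + ∫ u in s₀..T, A u = ∫ u in t₀..T, A u :=
    intervalIntegral.integral_add_adjacent_intervals (intInt hAc le_rfl hs₀) (intInt hAc hs₀ hT)
  have hmain : max C 0 + 1 ≤ ∫ u in s₀..T, A u := by linarith
  have hTs₀ : s₀ ≤ T := by
    by_contra hlt
    push_neg at hlt
    have h0 : 0 ≤ ∫ u in T..s₀, A u :=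
      intervalIntegral.integral_nonneg hlt.le (fun u hu => (hApos u (hT.trans hu.1)).le)
    rw [intervalIntegral.integral_symm] at hmain
    have := le_max_left C 0
    linarith [le_max_right C 0]
  exact ⟨T, hTs₀, by linarith [le_max_left C 0]⟩

/-- Blow-up lemma. -/
lemma blowup (hAc : ContinuousOn A (Ici t₀)) (hApos : ∀ t ≥ t₀, 0 < A t)
    (hAint : (∫⁻ t in Set.Ici t₀, ENNReal.ofReal (A t)) = ⊤)
    (h : IsSolOn t₀ A Θ Θ') {s₀ : ℝ} (hs₀ : t₀ ≤ s₀) (h1 : 0 < Θ s₀) (h2 : 0 ≤ Θ' s₀) :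
    Tendsto Θ atTop atTop := by
  set m := Θ s₀ with hm
  have hinv := invariance hAc hApos h hs₀ h1 h2
  obtain ⟨T, hTs₀, hTint⟩ := intA_unbounded hAc hApos hAint s₀ hs₀ (1 / m)
  have hTt₀ : t₀ ≤ T := hs₀.trans hTs₀
  have hθ'T : 1 ≤ Θ' T := by
    have hftc : Θ' T = Θ' s₀ + ∫ u in s₀..T, A u * Θ u := ftcT' hAc h hs₀ hTs₀
    have hmono : (∫ u in s₀..T, A u * m) ≤ ∫ u in s₀..T, A u * Θ u := by
      apply intervalIntegral.integral_mono_on hTs₀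
        ((intInt hAc hs₀ hTt₀).mul_const m) (intInt (hAc.mul (contT h)) hs₀ hTt₀)
      intro x hx
      exact mul_le_mul_of_nonneg_left ((hinv x hx.1).1) (hApos x (hs₀.trans hx.1)).le
    have hval : (∫ u in s₀..T, A u * m) = (∫ u in s₀..T, A u) * m := by
      rw [← intervalIntegral.integral_mul_const]
    have : 1 ≤ (∫ u in s₀..T, A u) * m := by
      rw [← div_le_iff₀ h1]
      exact hTint
    linarith
  have hinv2 := invariance hAc hApos h hTt₀ (lt_of_lt_of_le h1 (hinv T hTs₀).1)
    (by linarith : (0:ℝ) ≤ Θ' T)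
  have hgrow : ∀ t, T ≤ t → Θ T + (t - T) ≤ Θ t := by
    intro t ht
    have hftc : Θ t = Θ T + ∫ u in T..t, Θ' u := ftcT h hTt₀ ht
    have : (∫ u in T..t, (1:ℝ)) ≤ ∫ u in T..t, Θ' u := by
      apply intervalIntegral.integral_mono_on ht intervalIntegrable_const
        (intInt (contT' h) hTt₀ (hTt₀.trans ht))
      intro x hx
      exact le_trans hθ'T (hinv2 x hx.1).2
    rw [intervalIntegral.integral_const, smul_eq_mul, mul_one] at this
    linarith
  apply tendsto_atTop_mono' atTop (eventually_atTop.2 ⟨T, hgrow⟩)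
  exact tendsto_atTop_add_const_left _ _ (tendsto_atTop_add_const_right _ _ tendsto_id)

/-- Blow-up from a zero with positive slope. -/
lemma blowup0 (hAc : ContinuousOn A (Ici t₀)) (hApos : ∀ t ≥ t₀, 0 < A t)
    (hAint : (∫⁻ t in Set.Ici t₀, ENNReal.ofReal (A t)) = ⊤)
    (h : IsSolOn t₀ A Θ Θ') {s₀ : ℝ} (hs₀ : t₀ ≤ s₀) (h1 : Θ s₀ = 0) (h2 : 0 < Θ' s₀) :
    Tendsto Θ atTop atTop := by
  have hev : {t | 0 < Θ' t} ∈ 𝓝[Ici t₀] s₀ := (contT' h s₀ hs₀) (Ioi_mem_nhds h2)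
  rw [Metric.mem_nhdsWithin_iff] at hev
  obtain ⟨ε, hε, hball⟩ := hev
  set s₁ := s₀ + ε / 2 with hs₁def
  clear_value s₁
  have hs₁ : s₀ < s₁ := by rw [hs₁def]; linarith
  have hpos : ∀ x ∈ Icc s₀ s₁, 0 < Θ' x := by
    intro x hx
    refine hball ⟨?_, hs₀.trans hx.1⟩
    rw [Metric.mem_ball, Real.dist_eq, abs_sub_lt_iff]
    constructor <;> [linarith [hx.2, hs₁def.le, hs₁def.ge]; linarith [hx.1]]
  have hΘs₁ : 0 < Θ s₁ := by
    have hftc : Θ s₁ = Θ s₀ + ∫ u in s₀..s₁, Θ' u := ftcT h hs₀ hs₁.le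
    have : 0 < ∫ u in s₀..s₁, Θ' u := by
      apply intervalIntegral.intervalIntegral_pos_of_pos_on
        (intInt (contT' h) hs₀ (hs₀.trans hs₁.le))
        (fun x hx => hpos x ⟨hx.1.le, hx.2.le⟩) hs₁
    rw [hftc, h1]
    linarith
  exact blowup hAc hApos hAint h (hs₀.trans hs₁.le) hΘs₁
    (hpos s₁ ⟨hs₁.le, le_rfl⟩).le

/-- Gronwall-type closeness of solutions in terms of closeness of initial slopes. -/
lemma closeness (hAc : ContinuousOn A (Ici t₀)) {s₀ s : ℝ} (hs₀ : t₀ ≤ s₀) (hs : s₀ ≤ s) :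
    ∃ C : ℝ, 0 < C ∧ ∀ Θ₁ Θ₁' Θ₂ Θ₂' : ℝ → ℝ, IsSolOn t₀ A Θ₁ Θ₁' → IsSolOn t₀ A Θ₂ Θ₂' →
      Θ₁ s₀ = Θ₂ s₀ →
      |Θ₁ s - Θ₂ s| ≤ C * |Θ₁' s₀ - Θ₂' s₀| ∧ |Θ₁' s - Θ₂' s| ≤ C * |Θ₁' s₀ - Θ₂' s₀| := by
  obtain ⟨M, hM⟩ := (isCompact_Icc : IsCompact (Icc t₀ s)).exists_bound_of_continuousOn
    (hAc.mono Icc_subset_Ici_self)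
  set K := max 1 M with hK
  have hK1 : (1:ℝ) ≤ K := le_max_left _ _
  refine ⟨Real.exp (K * (s - s₀)), Real.exp_pos _, ?_⟩
  intro Θ₁ Θ₁' Θ₂ Θ₂' h₁ h₂ hv
  set δ := |Θ₁' s₀ - Θ₂' s₀| with hδ
  set w : ℝ → ℝ × ℝ := fun t => (Θ₁ t - Θ₂ t, Θ₁' t - Θ₂' t) with hw
  set w' : ℝ → ℝ × ℝ := fun t => (Θ₁' t - Θ₂' t, A t * Θ₁ t - A t * Θ₂ t) with hw'
  have hIccsub : Icc s₀ s ⊆ Ici t₀ := fun x hx => hs₀.trans hx.1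
  have hwc : ContinuousOn w (Icc s₀ s) :=
    (((contT h₁).mono hIccsub).sub ((contT h₂).mono hIccsub)).prodMk
      (((contT' h₁).mono hIccsub).sub ((contT' h₂).mono hIccsub))
  have hwd : ∀ x ∈ Ico s₀ s, HasDerivWithinAt w (w' x) (Ici x) x := by
    intro x hx
    have hxt : x ∈ Ici t₀ := hs₀.trans hx.1
    have hsub : Ici x ⊆ Ici t₀ := Ici_subset_Ici.2 hxt
    exact (((h₁ x hxt).1.mono hsub).sub ((h₂ x hxt).1.mono hsub)).prodMk
      (((h₁ x hxt).2.mono hsub).sub ((h₂ x hxt).2.mono hsub))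
  have hnorm : ∀ p : ℝ × ℝ, ‖p‖ = max |p.1| |p.2| := by
    intro p
    rw [Prod.norm_def, Real.norm_eq_abs, Real.norm_eq_abs]
  have ha : ‖w s₀‖ ≤ δ := by
    rw [hnorm]
    simp only [hw, hv, sub_self, abs_zero]
    exact max_le (abs_nonneg _) le_rfl
  have hbound : ∀ x ∈ Ico s₀ s, ‖w' x‖ ≤ K * ‖w x‖ + 0 := by
    intro x hx
    rw [add_zero, hnorm, hnorm]
    have h1 : |Θ₁' x - Θ₂' x| ≤ K * max |Θ₁ x - Θ₂ x| |Θ₁' x - Θ₂' x| := by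
      calc |Θ₁' x - Θ₂' x| ≤ max |Θ₁ x - Θ₂ x| |Θ₁' x - Θ₂' x| := le_max_right _ _
      _ ≤ K * max |Θ₁ x - Θ₂ x| |Θ₁' x - Θ₂' x| := by
          nlinarith [abs_nonneg (Θ₁ x - Θ₂ x), le_max_left |Θ₁ x - Θ₂ x| |Θ₁' x - Θ₂' x|,
            abs_nonneg (Θ₁' x - Θ₂' x)]
    have h2 : |A x * Θ₁ x - A x * Θ₂ x| ≤ K * max |Θ₁ x - Θ₂ x| |Θ₁' x - Θ₂' x| := by
      rw [← mul_sub, abs_mul]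
      have hMx : |A x| ≤ K := le_trans (by
        simpa using hM x ⟨hs₀.trans hx.1, hx.2.le⟩) (le_max_right 1 M)
      calc |A x| * |Θ₁ x - Θ₂ x| ≤ K * |Θ₁ x - Θ₂ x| :=
            mul_le_mul_of_nonneg_right hMx (abs_nonneg _)
      _ ≤ K * max |Θ₁ x - Θ₂ x| |Θ₁' x - Θ₂' x| :=
            mul_le_mul_of_nonneg_left (le_max_left _ _) (by linarith)
    exact max_le h1 h2
  have := norm_le_gronwallBound_of_norm_deriv_right_le hwc hwd ha hbound s ⟨hs, le_rfl⟩
  rw [gronwallBound_ε0] at this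
  rw [hnorm] at this
  have hexp : Real.exp (K * (s - s₀)) * δ = δ * Real.exp (K * (s - s₀)) := mul_comm _ _
  constructor
  · exact le_trans (le_trans (le_max_left _ _) this) (le_of_eq (mul_comm _ _))
  · exact le_trans (le_trans (le_max_right _ _) this) (le_of_eq (mul_comm _ _))

/-- Forward uniqueness. -/
lemma uniq (hAc : ContinuousOn A (Ici t₀)) {Θ₁ Θ₁' Θ₂ Θ₂' : ℝ → ℝ}
    (h₁ : IsSolOn t₀ A Θ₁ Θ₁') (h₂ : IsSolOn t₀ A Θ₂ Θ₂') {s₀ : ℝ} (hs₀ : t₀ ≤ s₀)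
    (hv : Θ₁ s₀ = Θ₂ s₀) (hv' : Θ₁' s₀ = Θ₂' s₀) :
    ∀ t, s₀ ≤ t → Θ₁ t = Θ₂ t ∧ Θ₁' t = Θ₂' t := by
  intro t ht
  obtain ⟨C, hC, hb⟩ := closeness hAc hs₀ ht
  obtain ⟨e1, e2⟩ := hb Θ₁ Θ₁' Θ₂ Θ₂' h₁ h₂ hv
  rw [hv', sub_self, abs_zero, mul_zero] at e1 e2
  constructor
  · have := abs_nonneg (Θ₁ t - Θ₂ t)
    have : |Θ₁ t - Θ₂ t| = 0 := le_antisymm e1 this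
    linarith [abs_eq_zero.1 this, sub_eq_zero.1 (abs_eq_zero.1 this)]
  · have := abs_nonneg (Θ₁' t - Θ₂' t)
    have : |Θ₁' t - Θ₂' t| = 0 := le_antisymm e2 this
    linarith [sub_eq_zero.1 (abs_eq_zero.1 this)]

/-- Backward uniqueness from a double zero. -/
lemma backward_zero (hAc : ContinuousOn A (Ici t₀)) (h : IsSolOn t₀ A Θ Θ') {z : ℝ}
    (hz : t₀ ≤ z) (h0 : Θ z = 0) (h0' : Θ' z = 0) : ∀ t ∈ Icc t₀ z, Θ t = 0 := by
  obtain ⟨M, hM⟩ := (isCompact_Icc : IsCompact (Icc t₀ z)).exists_bound_of_continuousOn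
    (hAc.mono Icc_subset_Ici_self)
  set K := max 1 M with hK
  have hK1 : (1:ℝ) ≤ K := le_max_left _ _
  set σ : ℝ → ℝ := fun t => z + t₀ - t with hσ
  have hσmap : ∀ t ∈ Icc t₀ z, σ t ∈ Icc t₀ z := by
    intro t ht
    exact ⟨by simp only [hσ]; linarith [ht.2], by simp only [hσ]; linarith [ht.1]⟩
  set w : ℝ → ℝ × ℝ := fun t => (Θ (σ t), Θ' (σ t)) with hw
  set w' : ℝ → ℝ × ℝ := fun t => (-Θ' (σ t), -(A (σ t) * Θ (σ t))) with hw'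
  have hσc : ContinuousOn σ (Icc t₀ z) := (continuous_const.sub continuous_id).continuousOn
  have hwc : ContinuousOn w (Icc t₀ z) := by
    apply ContinuousOn.prodMk
    · exact ((contT h).mono Icc_subset_Ici_self).comp hσc hσmap
    · exact ((contT' h).mono Icc_subset_Ici_self).comp hσc hσmap
  have hwd : ∀ x ∈ Ico t₀ z, HasDerivWithinAt w (w' x) (Ici x) x := by
    intro x hx
    have hσx : t₀ < σ x := by simp only [hσ]; linarith [hx.2]
    have hσd : HasDerivAt σ (-1) x := by
      simpa using (hasDerivAt_id x).const_sub (z + t₀)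
    have d1 : HasDerivAt (fun t => Θ (σ t)) (Θ' (σ x) * (-1)) x :=
      (hasD h hσx).comp x hσd
    have d2 : HasDerivAt (fun t => Θ' (σ t)) ((A (σ x) * Θ (σ x)) * (-1)) x :=
      (hasD' h hσx).comp x hσd
    have : HasDerivAt w (Θ' (σ x) * (-1), (A (σ x) * Θ (σ x)) * (-1)) x := d1.prodMk d2
    simpa [hw', mul_comm] using this.hasDerivWithinAt
  have hnorm : ∀ p : ℝ × ℝ, ‖p‖ = max |p.1| |p.2| := by
    intro p
    rw [Prod.norm_def, Real.norm_eq_abs, Real.norm_eq_abs]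
  have ha : ‖w t₀‖ ≤ 0 := by
    rw [hnorm]
    have : σ t₀ = z := by simp [hσ]
    simp [hw, this, h0, h0']
  have hbound : ∀ x ∈ Ico t₀ z, ‖w' x‖ ≤ K * ‖w x‖ + 0 := by
    intro x hx
    rw [add_zero, hnorm, hnorm]
    simp only [hw, hw', abs_neg]
    have hmem : σ x ∈ Icc t₀ z := hσmap x ⟨hx.1, hx.2.le⟩
    have h1 : |Θ' (σ x)| ≤ K * max |Θ (σ x)| |Θ' (σ x)| := by
      nlinarith [le_max_right |Θ (σ x)| |Θ' (σ x)|, abs_nonneg (Θ' (σ x)),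
        le_max_left |Θ (σ x)| |Θ' (σ x)|, abs_nonneg (Θ (σ x))]
    have h2 : |A (σ x) * Θ (σ x)| ≤ K * max |Θ (σ x)| |Θ' (σ x)| := by
      rw [abs_mul]
      have hMx : |A (σ x)| ≤ K := le_trans (by simpa using hM (σ x) hmem) (le_max_right 1 M)
      calc |A (σ x)| * |Θ (σ x)| ≤ K * |Θ (σ x)| :=
            mul_le_mul_of_nonneg_right hMx (abs_nonneg _)
      _ ≤ K * max |Θ (σ x)| |Θ' (σ x)| :=
            mul_le_mul_of_nonneg_left (le_max_left _ _) (by linarith)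
    exact max_le h1 h2
  intro t ht
  have hx : σ t ∈ Icc t₀ z := hσmap t ht
  have := norm_le_gronwallBound_of_norm_deriv_right_le hwc hwd ha hbound (σ t) hx
  rw [gronwallBound_ε0, zero_mul] at this
  rw [hnorm] at this
  have h1 : |Θ (σ (σ t))| ≤ 0 := le_trans (le_max_left _ _) this
  have hσσ : σ (σ t) = t := by simp [hσ]
  rw [hσσ] at h1
  have := abs_nonneg (Θ t)
  have : |Θ t| = 0 := le_antisymm h1 this
  exact abs_eq_zero.1 this

lemma neg_sol (h : IsSolOn t₀ A Θ Θ') : IsSolOn t₀ A (fun t => -Θ t) (fun t => -Θ' t) := by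
  intro t ht
  refine ⟨(h t ht).1.neg, ?_⟩
  exact (h t ht).2.neg.congr_deriv (by simp [mul_neg])

lemma sub_sol {Θ₁ Θ₁' Θ₂ Θ₂' : ℝ → ℝ} (h₁ : IsSolOn t₀ A Θ₁ Θ₁') (h₂ : IsSolOn t₀ A Θ₂ Θ₂') :
    IsSolOn t₀ A (fun t => Θ₁ t - Θ₂ t) (fun t => Θ₁' t - Θ₂' t) := by
  intro t ht
  refine ⟨(h₁ t ht).1.sub (h₂ t ht).1, ?_⟩
  exact ((h₁ t ht).2.sub (h₂ t ht).2).congr_deriv (by simp [mul_sub])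

lemma zero_sol : IsSolOn t₀ A (fun _ => 0) (fun _ => 0) := by
  intro t ht
  refine ⟨hasDerivWithinAt_const _ _ _, by simpa using hasDerivWithinAt_const (𝕜 := ℝ) t (Ici t₀) (0:ℝ)⟩

lemma not_top_bot {g : ℝ → ℝ} (hT : Tendsto g atTop atTop) (hB : Tendsto g atTop atBot) :
    False := by
  obtain ⟨x, h1, h2⟩ := ((hT.eventually_ge_atTop 1).and (hB.eventually_le_atBot 0)).exists
  linarith

lemma not_top_bdd {g : ℝ → ℝ} {M : ℝ} (hT : Tendsto g atTop atTop)
    (hB : ∀ t ≥ t₀, |g t| ≤ M) : False := by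
  obtain ⟨x, h1, h2⟩ := ((hT.eventually_ge_atTop (M + 1)).and (eventually_ge_atTop t₀)).exists
  have := le_trans (le_abs_self _) (hB x h2)
  linarith

lemma not_bot_bdd {g : ℝ → ℝ} {M : ℝ} (hT : Tendsto g atTop atBot)
    (hB : ∀ t ≥ t₀, |g t| ≤ M) : False := by
  obtain ⟨x, h1, h2⟩ := ((hT.eventually_le_atBot (-(M + 1))).and (eventually_ge_atTop t₀)).exists
  have h3 := (abs_le.1 (hB x h2)).1
  linarith

lemma neg_tendsto_atBot {g : ℝ → ℝ} (h : Tendsto (fun t => -g t) atTop atTop) :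
    Tendsto g atTop atBot :=
  tendsto_neg_atTop_iff.mp h

/-- If the solution tends to +∞, there is a point where both `Θ` and `Θ'` are positive. -/
lemma good_point (hsol : IsSolOn t₀ A Θ Θ') (hT : Tendsto Θ atTop atTop) :
    ∃ s, t₀ ≤ s ∧ 0 < Θ s ∧ 0 < Θ' s := by
  set c := |Θ t₀| + 1 with hc
  have hc0 : 0 < c := by positivity
  obtain ⟨T, hTc⟩ := eventually_atTop.1 (hT.eventually_ge_atTop (c + 1))
  set t₂ := max T t₀ + 1 with ht₂
  have ht₂t₀ : t₀ < t₂ := lt_of_le_of_lt (le_max_right T t₀) (by simp [ht₂])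
  have hΘt₂ : c + 1 ≤ Θ t₂ := hTc t₂ (le_trans (le_max_left T t₀) (by simp [ht₂]))
  set S := Icc t₀ t₂ ∩ Θ ⁻¹' (Iic c) with hS
  have hSclosed : IsClosed S :=
    ((contT hsol).mono (Icc_subset_Ici_self)).preimage_isClosed_of_isClosed isClosed_Icc isClosed_Iic
  have hSne : S.Nonempty := ⟨t₀, ⟨le_rfl, ht₂t₀.le⟩, by
    simp only [mem_preimage, mem_Iic]; linarith [le_abs_self (Θ t₀)]⟩
  have hSbdd : BddAbove S := ⟨t₂, fun x hx => hx.1.2⟩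
  set s := sSup S with hsdef
  have hsS : s ∈ S := hSclosed.csSup_mem hSne hSbdd
  have hst₀ : t₀ ≤ s := hsS.1.1
  have hst₂ : s < t₂ := lt_of_le_of_ne hsS.1.2 (by
    intro hcontra
    have := hsS.2
    rw [hcontra] at this
    simp only [mem_preimage, mem_Iic] at this
    linarith)
  obtain ⟨ξ, hξ, hslope⟩ := exists_hasDerivAt_eq_slope Θ Θ' hst₂
    ((contT hsol).mono (fun x hx => hst₀.trans hx.1))
    (fun x hx => hasD hsol (lt_of_le_of_lt hst₀ hx.1))
  have hΘξ : c < Θ ξ := by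
    by_contra hle
    push_neg at hle
    have : ξ ∈ S := ⟨⟨hst₀.trans hξ.1.le, hξ.2.le⟩, by simpa [mem_preimage, mem_Iic] using hle⟩
    exact absurd (le_csSup hSbdd this) (not_le.2 hξ.1)
  refine ⟨ξ, hst₀.trans hξ.1.le, by linarith, ?_⟩
  rw [hslope]
  apply div_pos
  · have : Θ s ≤ c := by simpa [mem_preimage, mem_Iic] using hsS.2
    linarith
  · linarith [hξ.1, hξ.2]

/-- Stability of tending to +∞ under small slope perturbation. -/
lemma atTop_stable (hAc : ContinuousOn A (Ici t₀)) (hApos : ∀ t ≥ t₀, 0 < A t)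
    (hAint : (∫⁻ t in Set.Ici t₀, ENNReal.ofReal (A t)) = ⊤)
    (h₁ : IsSolOn t₀ A Θ Θ') (hT : Tendsto Θ atTop atTop) :
    ∃ δ > 0, ∀ Θ₂ Θ₂' : ℝ → ℝ, IsSolOn t₀ A Θ₂ Θ₂' → Θ₂ t₀ = Θ t₀ →
      |Θ₂' t₀ - Θ' t₀| < δ → Tendsto Θ₂ atTop atTop := by
  obtain ⟨s, hst₀, hΘs, hΘ's⟩ := good_point h₁ hT
  obtain ⟨C, hC, hclose⟩ := closeness hAc (le_refl t₀) hst₀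
  refine ⟨min (Θ s) (Θ' s) / C, by positivity, ?_⟩
  intro Θ₂ Θ₂' h₂ hv hδ
  obtain ⟨e1, e2⟩ := hclose Θ₂ Θ₂' Θ Θ' h₂ h₁ hv
  have hmin1 : min (Θ s) (Θ' s) ≤ Θ s := min_le_left _ _
  have hmin2 : min (Θ s) (Θ' s) ≤ Θ' s := min_le_right _ _
  have hkey : C * |Θ₂' t₀ - Θ' t₀| < min (Θ s) (Θ' s) := by
    have hstep := mul_lt_mul_of_pos_left hδ hC
    have h' : C * (min (Θ s) (Θ' s) / C) = min (Θ s) (Θ' s) := by field_simp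
    rwa [h'] at hstep
  have h1 : 0 < Θ₂ s := by
    have := abs_lt.1 (lt_of_le_of_lt e1 hkey)
    linarith [this.1]
  have h2 : 0 < Θ₂' s := by
    have := abs_lt.1 (lt_of_le_of_lt e2 hkey)
    linarith [this.1]
  exact blowup hAc hApos hAint h₂ hst₀ h1 h2.le

/-- Dichotomy: every solution is bounded, tends to +∞, or tends to -∞. -/
lemma dichotomy (hAc : ContinuousOn A (Ici t₀)) (hApos : ∀ t ≥ t₀, 0 < A t)
    (hAint : (∫⁻ t in Set.Ici t₀, ENNReal.ofReal (A t)) = ⊤)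
    (hsol : IsSolOn t₀ A Θ Θ') :
    (∃ M, ∀ t ≥ t₀, |Θ t| ≤ M) ∨ Tendsto Θ atTop atTop ∨ Tendsto Θ atTop atBot := by
  by_cases hc1 : ∃ u ≥ t₀, 0 < Θ u ∧ 0 ≤ Θ' u
  · obtain ⟨u, hu, h1, h2⟩ := hc1
    exact Or.inr (Or.inl (blowup hAc hApos hAint hsol hu h1 h2))
  by_cases hc2 : ∃ u ≥ t₀, Θ u < 0 ∧ Θ' u ≤ 0
  · obtain ⟨u, hu, h1, h2⟩ := hc2
    refine Or.inr (Or.inr (neg_tendsto_atBot ?_))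
    exact blowup hAc hApos hAint (neg_sol hsol) hu (by simpa using h1) (by simpa using h2)
  by_cases hc3 : ∃ u ≥ t₀, Θ u = 0 ∧ 0 < Θ' u
  · obtain ⟨u, hu, h1, h2⟩ := hc3
    exact Or.inr (Or.inl (blowup0 hAc hApos hAint hsol hu h1 h2))
  by_cases hc4 : ∃ u ≥ t₀, Θ u = 0 ∧ Θ' u < 0
  · obtain ⟨u, hu, h1, h2⟩ := hc4
    refine Or.inr (Or.inr (neg_tendsto_atBot ?_))
    exact blowup0 hAc hApos hAint (neg_sol hsol) hu (by simpa using h1) (by simpa using h2)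
  by_cases hc5 : ∃ u ≥ t₀, Θ u = 0 ∧ Θ' u = 0
  · obtain ⟨u, hu, h1, h2⟩ := hc5
    left
    have hzero : ∀ t, u ≤ t → Θ t = 0 := by
      intro t ht
      have := uniq hAc hsol (zero_sol (t₀ := t₀) (A := A)) hu h1 h2 t ht
      simpa using this.1
    obtain ⟨M, hM⟩ := (isCompact_Icc : IsCompact (Icc t₀ u)).exists_bound_of_continuousOn
      ((contT hsol).mono Icc_subset_Ici_self)
    refine ⟨max M 0, fun t ht => ?_⟩
    rcases le_or_gt t u with h' | h'
    · exact le_trans (by simpa using hM t ⟨ht, h'⟩) (le_max_left _ _)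
    · simp [hzero t h'.le, le_max_right M 0]
  -- remaining case: Θ² is non-increasing
  push_neg at hc1 hc2 hc3 hc4 hc5
  left
  refine ⟨|Θ t₀|, fun t ht => ?_⟩
  have hanti : AntitoneOn (fun t => (Θ t) ^ 2) (Ici t₀) := by
    apply antitoneOn_of_deriv_nonpos (convex_Ici t₀)
    · exact ((contT hsol).pow 2)
    · intro x hx
      rw [interior_Ici] at hx
      exact (((hasD hsol hx).pow 2).differentiableAt).differentiableWithinAt
    · intro x hx
      rw [interior_Ici] at hx
      have hd : HasDerivAt (fun t => Θ t ^ 2) _ x := (hasD hsol hx).pow 2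
      rw [hd.deriv]
      push_cast
      simp only [pow_one]
      have hxt : t₀ ≤ x := hx.le
      rcases lt_trichotomy (Θ x) 0 with h' | h' | h'
      · have := hc2 x hxt h'
        nlinarith
      · simp [h']
      · have := hc1 x hxt h'
        nlinarith
  have h2 := hanti (self_mem_Ici) ht ht
  simp only at h2
  nlinarith [abs_nonneg (Θ t), abs_nonneg (Θ t₀), sq_abs (Θ t), sq_abs (Θ t₀)]

/-- A priori lower bound on slopes of solutions (with value `a` at `t₀`) tending to +∞. -/
lemma slope_lb (hAc : ContinuousOn A (Ici t₀)) (hApos : ∀ t ≥ t₀, 0 < A t)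
    (hAint : (∫⁻ t in Set.Ici t₀, ENNReal.ofReal (A t)) = ⊤) {a : ℝ} (ha : 0 < a) :
    ∃ β₀ : ℝ, ∀ Θ Θ' : ℝ → ℝ, IsSolOn t₀ A Θ Θ' → Θ t₀ = a →
      Tendsto Θ atTop atTop → β₀ ≤ Θ' t₀ := by
  set C₁ := ∫ u in t₀..(t₀+1), A u with hC₁
  refine ⟨-(a + a * C₁ + 1), ?_⟩
  intro Θ Θ' hsol hval hT
  by_contra hβ
  push_neg at hβ
  set β := Θ' t₀ with hβdef
  -- the first time the slope is nonnegative
  set S := {t | t₀ ≤ t ∧ 0 ≤ Θ' t} with hS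
  have hSne : S.Nonempty := by
    obtain ⟨s, h1, h2, h3⟩ := good_point hsol hT
    exact ⟨s, h1, h3.le⟩
  have hSclosed : IsClosed S := by
    have : S = Ici t₀ ∩ Θ' ⁻¹' (Ici 0) := by
      ext x; simp [hS, mem_Ici]
    rw [this]
    exact (contT' hsol).preimage_isClosed_of_isClosed isClosed_Ici isClosed_Ici
  have hSbdd : BddBelow S := ⟨t₀, fun x hx => hx.1⟩
  set s := sInf S with hsdef
  have hsS : s ∈ S := hSclosed.csInf_mem hSne hSbdd
  have hst₀ : t₀ ≤ s := hsS.1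
  have hs' : 0 ≤ Θ' s := hsS.2
  have hneg : ∀ t, t₀ ≤ t → t < s → Θ' t < 0 := by
    intro t h1 h2
    by_contra hge
    push_neg at hge
    exact absurd (csInf_le hSbdd ⟨h1, hge⟩) (not_le.2 h2)
  -- Θ is nonnegative on [t₀, s]
  have hpos : ∀ t ∈ Icc t₀ s, 0 ≤ Θ t := by
    intro t ht
    by_contra hlt
    push_neg at hlt
    have hts : t < s := by
      rcases lt_or_eq_of_le ht.2 with h' | h'
      · exact h'
      · exfalso
        -- t = s, Θ s < 0; find a zero z in (t₀, s), where Θ' z < 0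
        obtain ⟨z, hz, hz0⟩ := intermediate_value_Icc' ht.1 ((contT hsol).mono
          (fun x hx => le_trans (le_refl t₀) hx.1)) (by
            rw [hval]; exact ⟨hlt.le, ha.le⟩ : (0:ℝ) ∈ Icc (Θ t) (Θ t₀))
        have hzs : z < s := lt_of_le_of_ne (hz.2.trans_eq h') (by
          intro he
          rw [← h'] at he
          -- z = t, but Θ z = 0 ≠ Θ t < 0
          rw [he] at hz0
          linarith)
        have hz' : Θ' z < 0 := hneg z hz.1 hzs
        have := blowup0 hAc hApos hAint (neg_sol hsol) hz.1 (by simpa using hz0)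
          (by simpa using hz')
        exact not_top_bot hT (neg_tendsto_atBot this)
    -- Θ t < 0 with t < s
    obtain ⟨z, hz, hz0⟩ := intermediate_value_Icc' ht.1 ((contT hsol).mono
      (fun x hx => hx.1)) (by rw [hval]; exact ⟨hlt.le, ha.le⟩ : (0:ℝ) ∈ Icc (Θ t) (Θ t₀))
    have hzs : z < s := lt_of_le_of_lt hz.2 hts
    have hz' : Θ' z < 0 := hneg z hz.1 hzs
    have := blowup0 hAc hApos hAint (neg_sol hsol) hz.1 (by simpa using hz0)
      (by simpa using hz')
    exact not_top_bot hT (neg_tendsto_atBot this)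
  -- Θ ≤ a on [t₀, s]
  have hlea : ∀ t ∈ Icc t₀ s, Θ t ≤ a := by
    intro t ht
    have hanti : AntitoneOn Θ (Icc t₀ s) := by
      apply antitoneOn_of_deriv_nonpos (convex_Icc t₀ s)
      · exact (contT hsol).mono Icc_subset_Ici_self
      · intro x hx
        rw [interior_Icc] at hx
        exact (hasD hsol hx.1).differentiableAt.differentiableWithinAt
      · intro x hx
        rw [interior_Icc] at hx
        rw [(hasD hsol hx.1).deriv]
        exact (hneg x hx.1.le hx.2).le
    have := hanti (left_mem_Icc.2 hst₀) ht ht.1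
    rwa [hval] at this
  -- slope estimate on the initial window
  have hC₁nonneg : 0 ≤ C₁ := intervalIntegral.integral_nonneg (by linarith)
    (fun u hu => (hApos u hu.1).le)
  have hkey : ∀ t ∈ Icc t₀ (min s (t₀+1)), Θ' t ≤ β + a * C₁ := by
    intro t ht
    have htt₀ : t₀ ≤ t := ht.1
    have hts : t ≤ s := le_trans ht.2 (min_le_left _ _)
    have ht1 : t ≤ t₀ + 1 := le_trans ht.2 (min_le_right _ _)
    have hftc : Θ' t = β + ∫ u in t₀..t, A u * Θ u := ftcT' hAc hsol le_rfl htt₀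
    have hm1 : (∫ u in t₀..t, A u * Θ u) ≤ ∫ u in t₀..t, A u * a := by
      apply intervalIntegral.integral_mono_on htt₀ (intInt (hAc.mul (contT hsol)) le_rfl htt₀)
        ((intInt hAc le_rfl htt₀).mul_const a)
      intro x hx
      exact mul_le_mul_of_nonneg_left (hlea x ⟨hx.1, hx.2.trans hts⟩) (hApos x hx.1).le
    have hm2 : (∫ u in t₀..t, A u * a) = (∫ u in t₀..t, A u) * a :=
      by rw [← intervalIntegral.integral_mul_const]
    have hm3 : (∫ u in t₀..t, A u) ≤ C₁ := by
      rw [hC₁, ← intervalIntegral.integral_add_adjacent_intervals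
        (intInt hAc le_rfl htt₀) (intInt hAc htt₀ (by linarith : t₀ ≤ t₀+1))]
      have : 0 ≤ ∫ u in t..(t₀+1), A u := intervalIntegral.integral_nonneg ht1
        (fun u hu => (hApos u (htt₀.trans hu.1)).le)
      linarith
    nlinarith
  -- hence s > t₀ + 1
  have hs1 : t₀ + 1 < s := by
    by_contra hle
    push_neg at hle
    have : s ∈ Icc t₀ (min s (t₀+1)) := ⟨hst₀, le_min le_rfl hle⟩
    have := hkey s this
    linarith
  -- and Θ (t₀+1) < 0, contradiction
  have hval1 : Θ (t₀+1) = a + ∫ u in t₀..(t₀+1), Θ' u := by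
    have := ftcT hsol le_rfl (by linarith : t₀ ≤ t₀+1)
    rwa [hval] at this
  have hm : (∫ u in t₀..(t₀+1), Θ' u) ≤ ∫ u in t₀..(t₀+1), (β + a * C₁) := by
    apply intervalIntegral.integral_mono_on (by linarith)
      (intInt (contT' hsol) le_rfl (by linarith)) intervalIntegrable_const
    intro x hx
    exact hkey x ⟨hx.1, by
      rw [min_eq_right hs1.le]
      exact hx.2⟩
  rw [intervalIntegral.integral_const, smul_eq_mul] at hm
  have hfinal : Θ (t₀+1) < 0 := by
    rw [hval1]
    have : (t₀ + 1 - t₀) * (β + a * C₁) = β + a * C₁ := by ring_nf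
    rw [this] at hm
    linarith
  have := hpos (t₀+1) ⟨by linarith, by linarith⟩
  linarith

/-- Properties of a bounded solution with positive initial value. -/
lemma bounded_props (hAc : ContinuousOn A (Ici t₀)) (hApos : ∀ t ≥ t₀, 0 < A t)
    (hAint : (∫⁻ t in Set.Ici t₀, ENNReal.ofReal (A t)) = ⊤)
    (hsol : IsSolOn t₀ A Θ Θ') {a M : ℝ} (ha : 0 < a) (hval : Θ t₀ = a)
    (hbd : ∀ t ≥ t₀, |Θ t| ≤ M) :
    (∀ t ≥ t₀, 0 < Θ t) ∧ StrictAntiOn Θ (Set.Ici t₀) ∧ Tendsto Θ atTop (nhds 0) := by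
  -- no point with positive value and nonnegative slope
  have hnb1 : ∀ u ≥ t₀, 0 < Θ u → Θ' u < 0 := by
    intro u hu h1
    by_contra hge
    push_neg at hge
    exact not_top_bdd (blowup hAc hApos hAint hsol hu h1 hge) hbd
  have hnb3 : ∀ u ≥ t₀, Θ u = 0 → Θ' u = 0 := by
    intro u hu h1
    rcases lt_trichotomy (Θ' u) 0 with h' | h' | h'
    · exact absurd (neg_tendsto_atBot
        (blowup0 hAc hApos hAint (neg_sol hsol) hu (by simpa using h1) (by simpa using h')))
        (fun hb => not_bot_bdd hb hbd)
    · exact h'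
    · exact absurd (blowup0 hAc hApos hAint hsol hu h1 h') (fun ht => not_top_bdd ht hbd)
  -- positivity
  have hpos : ∀ t ≥ t₀, 0 < Θ t := by
    intro t ht
    by_contra hle
    push_neg at hle
    obtain ⟨z, hz, hz0⟩ := intermediate_value_Icc' ht ((contT hsol).mono
      (fun x hx => hx.1)) (by rw [hval]; exact ⟨hle, ha.le⟩ : (0:ℝ) ∈ Icc (Θ t) (Θ t₀))
    have hz' : Θ' z = 0 := hnb3 z hz.1 hz0
    have := backward_zero hAc hsol hz.1 hz0 hz' t₀ ⟨le_rfl, hz.1⟩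
    rw [hval] at this
    linarith
  have hneg : ∀ t ≥ t₀, Θ' t < 0 := fun t ht => hnb1 t ht (hpos t ht)
  -- strict antitonicity
  have hanti : StrictAntiOn Θ (Ici t₀) := by
    apply strictAntiOn_of_deriv_neg (convex_Ici t₀) (contT hsol)
    intro x hx
    rw [interior_Ici] at hx
    rw [(hasD hsol hx).deriv]
    exact hneg x hx.le
  refine ⟨hpos, hanti, ?_⟩
  -- convergence to 0
  set Φ : ℝ → ℝ := fun t => Θ (max t t₀) with hΦ
  have hΦanti : Antitone Φ := by
    intro x y hxy
    exact hanti.antitoneOn (le_max_right x t₀) (le_max_right y t₀) (max_le_max hxy le_rfl)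
  have hΦbdd : BddBelow (range Φ) := ⟨0, by
    rintro y ⟨t, rfl⟩
    exact (hpos _ (le_max_right t t₀)).le⟩
  have hΦten : Tendsto Φ atTop (nhds (⨅ t, Φ t)) := tendsto_atTop_ciInf hΦanti hΦbdd
  set L := ⨅ t, Φ t with hL
  have hL0 : 0 ≤ L := le_ciInf (fun t => (hpos _ (le_max_right t t₀)).le)
  have hΘten : Tendsto Θ atTop (nhds L) := by
    apply hΦten.congr'
    filter_upwards [eventually_ge_atTop t₀] with t ht
    simp [hΦ, max_eq_left ht]
  have hLzero : L = 0 := by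
    by_contra hne
    have hLpos : 0 < L := lt_of_le_of_ne hL0 (Ne.symm hne)
    have hΘge : ∀ t ≥ t₀, L ≤ Θ t := by
      intro t ht
      have h5 := ciInf_le hΦbdd t
      have h6 : Φ t = Θ t := by simp [hΦ, max_eq_left ht]
      rw [← hL, h6] at h5
      exact h5
    obtain ⟨T, hT, hTint⟩ := intA_unbounded hAc hApos hAint t₀ le_rfl ((|Θ' t₀| + 1) / L)
    have hftc : Θ' T = Θ' t₀ + ∫ u in t₀..T, A u * Θ u := ftcT' hAc hsol le_rfl hT
    have hm1 : (∫ u in t₀..T, A u * L) ≤ ∫ u in t₀..T, A u * Θ u := by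
      apply intervalIntegral.integral_mono_on hT ((intInt hAc le_rfl hT).mul_const L)
        (intInt (hAc.mul (contT hsol)) le_rfl hT)
      intro x hx
      exact mul_le_mul_of_nonneg_left (hΘge x hx.1) (hApos x hx.1).le
    have hm2 : (∫ u in t₀..T, A u * L) = (∫ u in t₀..T, A u) * L := by
      rw [← intervalIntegral.integral_mul_const]
    have hm3 : (|Θ' t₀| + 1) ≤ (∫ u in t₀..T, A u) * L := by
      rw [← div_le_iff₀ hLpos]
      exact hTint
    have : 0 < Θ' T := by
      have h4 := le_trans (neg_abs_le (Θ' t₀)) (le_refl (Θ' t₀))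
      nlinarith [neg_abs_le (Θ' t₀), abs_nonneg (Θ' t₀)]
    exact absurd this (not_lt.2 (hneg T hT).le)
  rwa [hLzero] at hΘten

end UBaux

open UBaux in
theorem unique_initial_slope_for_bounded_solution (t₀ : ℝ) (ht₀ : 0 ≤ t₀)
    (A : ℝ → ℝ) (hAc : ContinuousOn A (Set.Ici t₀)) (hApos : ∀ t ≥ t₀, 0 < A t)
    (hAint : (∫⁻ t in Set.Ici t₀, ENNReal.ofReal (A t)) = ⊤)
    (a : ℝ) (ha : 0 < a) :
    ∃ b : ℝ,
      (∀ Θ Θ' : ℝ → ℝ, Θ t₀ = a → Θ' t₀ = b → IsSolOn t₀ A Θ Θ' →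
        (∃ M, ∀ t ≥ t₀, |Θ t| ≤ M) ∧ (∀ t ≥ t₀, 0 < Θ t) ∧
        StrictAntiOn Θ (Set.Ici t₀) ∧ Filter.Tendsto Θ Filter.atTop (nhds 0)) ∧
      (∀ b' : ℝ, b < b' → ∀ Θ Θ' : ℝ → ℝ, Θ t₀ = a → Θ' t₀ = b' → IsSolOn t₀ A Θ Θ' →
        Filter.Tendsto Θ Filter.atTop Filter.atTop) ∧
      (∀ b' : ℝ, b' < b → ∀ Θ Θ' : ℝ → ℝ, Θ t₀ = a → Θ' t₀ = b' → IsSolOn t₀ A Θ Θ' →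
        Filter.Tendsto Θ Filter.atTop Filter.atBot) ∧
      (∀ b' : ℝ, ∀ Θ Θ' : ℝ → ℝ, Θ t₀ = a → Θ' t₀ = b' → IsSolOn t₀ A Θ Θ' →
        (∃ M, ∀ t ≥ t₀, |Θ t| ≤ M) → b' = b) := by
  classical
  by_cases hP : ∃ β : ℝ, ∃ Θ Θ' : ℝ → ℝ, Θ t₀ = a ∧ Θ' t₀ = β ∧ IsSolOn t₀ A Θ Θ' ∧
      ∃ M, ∀ t ≥ t₀, |Θ t| ≤ M
  · -- a bounded solution exists
    obtain ⟨b, Θb, Θb', hvb, hsb, hsolb, Mb, hMb⟩ := hP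
    have clause2 : ∀ b' : ℝ, b < b' → ∀ Θ Θ' : ℝ → ℝ, Θ t₀ = a → Θ' t₀ = b' →
        IsSolOn t₀ A Θ Θ' → Tendsto Θ atTop atTop := by
      intro b' hb' Θ Θ' hv hs hsol
      have hDsol := sub_sol hsol hsolb
      have hDtop : Tendsto (fun t => Θ t - Θb t) atTop atTop := by
        apply blowup0 hAc hApos hAint hDsol le_rfl (by simp [hv, hvb])
        simp only [hs, hsb]
        linarith
      apply tendsto_atTop_mono' atTop ?_ (tendsto_atTop_add_const_right _ (-Mb) hDtop)
      filter_upwards [eventually_ge_atTop t₀] with t ht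
      have := (abs_le.1 (hMb t ht)).1
      linarith
    have clause3 : ∀ b' : ℝ, b' < b → ∀ Θ Θ' : ℝ → ℝ, Θ t₀ = a → Θ' t₀ = b' →
        IsSolOn t₀ A Θ Θ' → Tendsto Θ atTop atBot := by
      intro b' hb' Θ Θ' hv hs hsol
      have hDsol := sub_sol hsolb hsol
      have hDtop : Tendsto (fun t => Θb t - Θ t) atTop atTop := by
        apply blowup0 hAc hApos hAint hDsol le_rfl (by simp [hv, hvb])
        simp only [hsb, hs]
        linarith
      have hten : Tendsto (fun t => Mb - (Θb t - Θ t)) atTop atBot := by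
        apply neg_tendsto_atBot
        have := tendsto_atTop_add_const_right atTop (-Mb) hDtop
        apply this.congr
        intro t
        ring
      apply tendsto_atBot_mono' atTop ?_ hten
      filter_upwards [eventually_ge_atTop t₀] with t ht
      have := (abs_le.1 (hMb t ht)).2
      linarith
    refine ⟨b, ?_, clause2, clause3, ?_⟩
    · intro Θ Θ' hv hs hsol
      have hEq := uniq hAc hsol hsolb le_rfl (by rw [hv, hvb]) (by rw [hs, hsb])
      have hbd : ∀ t ≥ t₀, |Θ t| ≤ Mb := fun t ht => by
        rw [(hEq t ht).1]; exact hMb t ht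
      obtain ⟨hpos, hanti, hten⟩ := bounded_props hAc hApos hAint hsol ha hv hbd
      exact ⟨⟨Mb, hbd⟩, hpos, hanti, hten⟩
    · intro b' Θ Θ' hv hs hsol hbdd
      obtain ⟨M, hM⟩ := hbdd
      by_contra hne
      rcases lt_or_gt_of_ne hne with hlt | hgt
      · have htop := clause3 b' hlt Θ Θ' hv hs hsol
        exact not_bot_bdd htop hM
      · have htop := clause2 b' hgt Θ Θ' hv hs hsol
        exact not_top_bdd htop hM
  · -- no bounded solution exists (pathological case)
    set TT : Set ℝ := {β | ∃ Θ Θ' : ℝ → ℝ, Θ t₀ = a ∧ Θ' t₀ = β ∧ IsSolOn t₀ A Θ Θ' ∧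
      Tendsto Θ atTop atTop} with hTTdef
    set UU : Set ℝ := {β | ∃ Θ Θ' : ℝ → ℝ, Θ t₀ = a ∧ Θ' t₀ = β ∧ IsSolOn t₀ A Θ Θ' ∧
      Tendsto Θ atTop atBot} with hUUdef
    have key : ∀ (β : ℝ) (Θ Θ' : ℝ → ℝ), Θ t₀ = a → Θ' t₀ = β → IsSolOn t₀ A Θ Θ' →
        (β ∈ TT ∧ Tendsto Θ atTop atTop) ∨ (β ∈ UU ∧ Tendsto Θ atTop atBot) := by
      intro β Θ Θ' hv hs hsol
      rcases dichotomy hAc hApos hAint hsol with hbdd | htop | hbot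
      · exact absurd ⟨β, Θ, Θ', hv, hs, hsol, hbdd⟩ hP
      · exact Or.inl ⟨⟨Θ, Θ', hv, hs, hsol, htop⟩, htop⟩
      · exact Or.inr ⟨⟨Θ, Θ', hv, hs, hsol, hbot⟩, hbot⟩
    have hUT : ∀ γ ∈ UU, ∀ τ ∈ TT, γ < τ := by
      rintro γ ⟨Θγ, Θγ', hvγ, hsγ, hsolγ, hbotγ⟩ τ ⟨Θτ, Θτ', hvτ, hsτ, hsolτ, htopτ⟩
      by_contra hge
      push_neg at hge
      rcases eq_or_lt_of_le hge with heq | hlt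
      · have hEq := uniq hAc hsolτ hsolγ le_rfl (by rw [hvτ, hvγ]) (by rw [hsτ, hsγ, heq])
        have : Tendsto Θγ atTop atTop := by
          apply htopτ.congr'
          filter_upwards [eventually_ge_atTop t₀] with t ht
          exact (hEq t ht).1
        exact not_top_bot this hbotγ
      · have hDsol := sub_sol hsolγ hsolτ
        have hDtop : Tendsto (fun t => Θγ t - Θτ t) atTop atTop := by
          apply blowup0 hAc hApos hAint hDsol le_rfl (by simp [hvγ, hvτ])
          simp only [hsγ, hsτ]
          linarith
        have : Tendsto Θγ atTop atTop := by
          apply tendsto_atTop_mono' atTop ?_ hDtop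
          filter_upwards [htopτ.eventually_ge_atTop 0] with t ht
          linarith
        exact not_top_bot this hbotγ
    obtain ⟨β₀, hβ₀⟩ := slope_lb hAc hApos hAint ha
    have hTTbdd : BddBelow TT := ⟨β₀, by
      rintro τ ⟨Θ, Θ', hv, hs, hsol, htop⟩
      rw [← hs]
      exact hβ₀ Θ Θ' hsol hv htop⟩
    have hUUub : ∀ γ ∈ UU, γ < 0 := by
      rintro γ ⟨Θ, Θ', hv, hs, hsol, hbot⟩
      by_contra hge
      push_neg at hge
      have htop : Tendsto Θ atTop atTop := by
        apply blowup hAc hApos hAint hsol le_rfl (by rw [hv]; exact ha)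
        rw [hs]
        exact hge
      exact not_top_bot htop hbot
    have hUUbdd : BddAbove UU := ⟨0, fun γ hγ => (hUUub γ hγ).le⟩
    by_cases hT : TT.Nonempty <;> by_cases hU : UU.Nonempty
    · -- both nonempty: b is the midpoint of the gap
      have hle : sSup UU ≤ sInf TT :=
        csSup_le hU (fun γ hγ => le_csInf hT (fun τ hτ => (hUT γ hγ τ hτ).le))
      set b := (sSup UU + sInf TT) / 2 with hbdef
      have clause1False : ∀ Θ Θ' : ℝ → ℝ, Θ t₀ = a → Θ' t₀ = b → IsSolOn t₀ A Θ Θ' → False := by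
        intro Θ Θ' hv hs hsol
        rcases key b Θ Θ' hv hs hsol with ⟨hmemT, htop⟩ | ⟨hmemU, hbot⟩
        · -- b ∈ TT; then sSup UU = sInf TT = b, approach from below in UU
          have h1 : sInf TT ≤ b := csInf_le hTTbdd hmemT
          obtain ⟨δ, hδ, hstab⟩ := atTop_stable hAc hApos hAint hsol htop
          obtain ⟨γ, hγUU, hγgt⟩ := exists_lt_of_lt_csSup hU
            (by simp only [hbdef] at h1 ⊢; linarith : b - δ < sSup UU)
          have hγlt : γ < b := hUT γ hγUU b hmemT
          obtain ⟨Θγ, Θγ', hvγ, hsγ, hsolγ, hbotγ⟩ := hγUU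
          have happ : Tendsto Θγ atTop atTop := by
            apply hstab Θγ Θγ' hsolγ (by rw [hvγ, hv])
            rw [hsγ, hs]
            rw [abs_sub_lt_iff]
            constructor <;> linarith
          exact not_top_bot happ hbotγ
        · -- b ∈ UU; approach from above in TT
          have h1 : b ≤ sSup UU := le_csSup hUUbdd hmemU
          have hnegtop : Tendsto (fun t => -Θ t) atTop atTop := tendsto_neg_atTop_iff.mpr hbot
          obtain ⟨δ, hδ, hstab⟩ := atTop_stable hAc hApos hAint (neg_sol hsol) hnegtop
          obtain ⟨τ, hτTT, hτlt⟩ := exists_lt_of_csInf_lt hT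
            (by simp only [hbdef] at h1 ⊢; linarith : sInf TT < b + δ)
          have hτgt : b < τ := hUT b hmemU τ hτTT
          obtain ⟨Θτ, Θτ', hvτ, hsτ, hsolτ, htopτ⟩ := hτTT
          have happ : Tendsto (fun t => -Θτ t) atTop atTop := by
            apply hstab _ _ (neg_sol hsolτ) (by show -Θτ t₀ = -Θ t₀; rw [hvτ, hv])
            simp only [hsτ, hs]
            rw [abs_sub_lt_iff]
            constructor <;> linarith
          exact not_top_bot htopτ (neg_tendsto_atBot happ)
      refine ⟨b, ?_, ?_, ?_, ?_⟩
      · intro Θ Θ' hv hs hsol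
        exact (clause1False Θ Θ' hv hs hsol).elim
      · intro b' hb' Θ Θ' hv hs hsol
        rcases key b' Θ Θ' hv hs hsol with ⟨_, htop⟩ | ⟨hmemU, _⟩
        · exact htop
        · have h1 : b' ≤ sSup UU := le_csSup hUUbdd hmemU
          simp only [hbdef] at hb' h1
          linarith
      · intro b' hb' Θ Θ' hv hs hsol
        rcases key b' Θ Θ' hv hs hsol with ⟨hmemT, _⟩ | ⟨_, hbot⟩
        · have h1 : sInf TT ≤ b' := csInf_le hTTbdd hmemT
          simp only [hbdef] at hb' h1
          linarith
        · exact hbot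
      · intro b' Θ Θ' hv hs hsol hbdd
        exact absurd ⟨b', Θ, Θ', hv, hs, hsol, hbdd⟩ hP
    · -- TT nonempty, UU empty
      set b := sInf TT - 1 with hbdef
      refine ⟨b, ?_, ?_, ?_, ?_⟩
      · intro Θ Θ' hv hs hsol
        rcases key b Θ Θ' hv hs hsol with ⟨hmemT, _⟩ | ⟨hmemU, _⟩
        · have h1 : sInf TT ≤ b := csInf_le hTTbdd hmemT
          simp only [hbdef] at h1
          linarith
        · exact absurd ⟨b, hmemU⟩ hU
      · intro b' hb' Θ Θ' hv hs hsol
        rcases key b' Θ Θ' hv hs hsol with ⟨_, htop⟩ | ⟨hmemU, _⟩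
        · exact htop
        · exact absurd ⟨b', hmemU⟩ hU
      · intro b' hb' Θ Θ' hv hs hsol
        rcases key b' Θ Θ' hv hs hsol with ⟨hmemT, _⟩ | ⟨_, hbot⟩
        · have h1 : sInf TT ≤ b' := csInf_le hTTbdd hmemT
          simp only [hbdef] at hb' h1
          linarith
        · exact hbot
      · intro b' Θ Θ' hv hs hsol hbdd
        exact absurd ⟨b', Θ, Θ', hv, hs, hsol, hbdd⟩ hP
    · -- TT empty, UU nonempty
      set b := sSup UU + 1 with hbdef
      refine ⟨b, ?_, ?_, ?_, ?_⟩
      · intro Θ Θ' hv hs hsol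
        rcases key b Θ Θ' hv hs hsol with ⟨hmemT, _⟩ | ⟨hmemU, _⟩
        · exact absurd ⟨b, hmemT⟩ hT
        · have h1 : b ≤ sSup UU := le_csSup hUUbdd hmemU
          simp only [hbdef] at h1
          linarith
      · intro b' hb' Θ Θ' hv hs hsol
        rcases key b' Θ Θ' hv hs hsol with ⟨_, htop⟩ | ⟨hmemU, _⟩
        · exact htop
        · have h1 : b' ≤ sSup UU := le_csSup hUUbdd hmemU
          simp only [hbdef] at hb' h1
          linarith
      · intro b' hb' Θ Θ' hv hs hsol
        rcases key b' Θ Θ' hv hs hsol with ⟨hmemT, _⟩ | ⟨_, hbot⟩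
        · exact absurd ⟨b', hmemT⟩ hT
        · exact hbot
      · intro b' Θ Θ' hv hs hsol hbdd
        exact absurd ⟨b', Θ, Θ', hv, hs, hsol, hbdd⟩ hP
    · -- both empty
      refine ⟨0, ?_, ?_, ?_, ?_⟩
      · intro Θ Θ' hv hs hsol
        rcases key 0 Θ Θ' hv hs hsol with ⟨hmemT, _⟩ | ⟨hmemU, _⟩
        · exact absurd ⟨0, hmemT⟩ hT
        · exact absurd ⟨0, hmemU⟩ hU
      · intro b' hb' Θ Θ' hv hs hsol
        rcases key b' Θ Θ' hv hs hsol with ⟨_, htop⟩ | ⟨hmemU, _⟩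
        · exact htop
        · exact absurd ⟨b', hmemU⟩ hU
      · intro b' hb' Θ Θ' hv hs hsol
        rcases key b' Θ Θ' hv hs hsol with ⟨hmemT, _⟩ | ⟨_, hbot⟩
        · exact absurd ⟨b', hmemT⟩ hT
        · exact hbot
      · intro b' Θ Θ' hv hs hsol hbdd
        exact absurd ⟨b', Θ, Θ', hv, hs, hsol, hbdd⟩ hP
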